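/- Let (X,d) be a metric space, f : X → X a map, α' ≥ 0, and let B₁, …, B_m be nonempty subsets of X. Let E ⊆ {1,…,m} × {1,…,m} be a set of directed edges such that for every (k,j) ∈ E, every x ∈ B_k and every y ∈ B_j satisfy d(f(x), y) ≤ α'. Suppose every index k ∈ {1,…,m} lies on a directed cycle of E. Then for every α > α', every point of B₁ ∪ … ∪ B_m is α-chain recurrent; that is, B₁ ∪ … ∪ B_m ⊆ 𝓡_α. -/
import Mathlib


/-- An ε-chain from `y` to `z` for the map `f`: a finite sequence
`y = c 0, c 1, …, c m = z` with `m ≥ 1` (i.e. at least two points) and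
`dist (f (c k)) (c (k+1)) < ε` for all `k < m`. -/
def EpsChain {X : Type*} [MetricSpace X] (f : X → X) (ε : ℝ) (y z : X) : Prop :=
  ∃ m : ℕ, 1 ≤ m ∧ ∃ c : ℕ → X, c 0 = y ∧ c m = z ∧ ∀ k < m, dist (f (c k)) (c (k + 1)) < ε

/-- The set `𝓡_ε` of ε-chain recurrent points of `f`. -/
def chainRecSet {X : Type*} [MetricSpace X] (f : X → X) (ε : ℝ) : Set X :=
  {y | EpsChain f ε y y}

/-- The index `k` lies on a directed cycle of the edge set `E`. -/
def OnCycle {m : ℕ} (E : Set (Fin m × Fin m)) (k : Fin m) : Prop :=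
  ∃ s : ℕ, 1 ≤ s ∧ ∃ c : ℕ → Fin m, c 0 = k ∧ c s = k ∧ ∀ i < s, (c i, c (i + 1)) ∈ E

/-- if every edge `(k,j) ∈ E` satisfies `dist (f x) y ≤ α'` for all
`x ∈ B k`, `y ∈ B j`, and every index lies on a directed cycle of `E`, then for every
`α > α'` all points of `B₁ ∪ ⋯ ∪ B_m` are α-chain recurrent. -/
theorem stmt_6 {X : Type*} [MetricSpace X] (f : X → X) (α' : ℝ) (hα' : 0 ≤ α')
    (m : ℕ) (B : Fin m → Set X) (hBne : ∀ k, (B k).Nonempty)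
    (E : Set (Fin m × Fin m))
    (hE : ∀ e ∈ E, ∀ x ∈ B e.1, ∀ y ∈ B e.2, dist (f x) y ≤ α')
    (hcyc : ∀ k : Fin m, OnCycle E k) :
    ∀ α : ℝ, α' < α → (⋃ k, B k) ⊆ chainRecSet f α := by
  intro α hα x hx
  obtain ⟨k, hxk⟩ := Set.mem_iUnion.mp hx
  obtain ⟨s, hs1, c, hc0, hcs, hce⟩ := hcyc k
  refine ⟨s, hs1, fun i => if i = 0 ∨ i = s then x else (hBne (c i)).some, by simp, by simp, ?_⟩
  have hmem : ∀ i ≤ s, (if i = 0 ∨ i = s then x else (hBne (c i)).some) ∈ B (c i) := by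
    intro i hi
    by_cases h : i = 0 ∨ i = s
    · rcases h with h | h <;> simp [h, hc0, hcs, hxk]
    · simp [h, (hBne (c i)).some_mem]
  intro i hi
  calc dist (f (if i = 0 ∨ i = s then x else (hBne (c i)).some))
        (if i + 1 = 0 ∨ i + 1 = s then x else (hBne (c (i+1))).some)
      ≤ α' := hE _ (hce i hi) _ (hmem i hi.le) _ (hmem (i+1) hi)
    _ < α := hα
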